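/- Let μ be a probability measure on ℝ and let μ̄ be its reflection, μ̄(S) = μ(−S). If the free convolution μ ⊞ μ̄ equals the Dirac measure δ₀, then μ = δ_a for some a ∈ ℝ. -/

import Mathlib

open MeasureTheory

/-- Integrability of the real part of a complex-valued function. -/
lemma myIntRe {X : Type*} [MeasurableSpace X] {μ : Measure X} {f : X → ℂ}
    (hf : Integrable f μ) : Integrable (fun t => (f t).re) μ := by
  simpa [RCLike.re_to_complex] using hf.re

/-- Integrability of the imaginary part of a complex-valued function. -/
lemma myIntIm {X : Type*} [MeasurableSpace X] {μ : Measure X} {f : X → ℂ}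
    (hf : Integrable f μ) : Integrable (fun t => (f t).im) μ := by
  simpa [RCLike.im_to_complex] using hf.im

/-- Integral commutes with real part. -/
lemma myIntegralRe {X : Type*} [MeasurableSpace X] {μ : Measure X} {f : X → ℂ}
    (hf : Integrable f μ) : (∫ t, (f t).re ∂μ) = (∫ t, f t ∂μ).re := by
  simpa [RCLike.re_to_complex] using integral_re hf

/-- Integral commutes with imaginary part. -/
lemma myIntegralIm {X : Type*} [MeasurableSpace X] {μ : Measure X} {f : X → ℂ}
    (hf : Integrable f μ) : (∫ t, (f t).im ∂μ) = (∫ t, f t ∂μ).im := by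
  simpa [RCLike.im_to_complex] using integral_im hf

/-- Imaginary part identity for the Cauchy transform. -/
lemma lemA (μ : Measure ℝ) (w c : ℂ)
    (hf : Integrable (fun t : ℝ => (w - (t : ℂ))⁻¹) μ)
    (hI : (∫ t : ℝ, (w - (t : ℂ))⁻¹ ∂μ) = c) (hw : w.im ≠ 0) :
    Integrable (fun t : ℝ => (Complex.normSq (w - (t : ℂ)))⁻¹) μ ∧
    w.im * (∫ t : ℝ, (Complex.normSq (w - (t : ℂ)))⁻¹ ∂μ) = -c.im := by
  have him : (fun t : ℝ => ((w - (t : ℂ))⁻¹).im)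
      = fun t : ℝ => -w.im * (Complex.normSq (w - (t : ℂ)))⁻¹ := by
    funext t
    rw [Complex.inv_im]
    simp [div_eq_mul_inv]
  have hint : Integrable (fun t : ℝ => -w.im * (Complex.normSq (w - (t : ℂ)))⁻¹) μ := by
    rw [← him]; exact myIntIm hf
  have hg : Integrable (fun t : ℝ => (Complex.normSq (w - (t : ℂ)))⁻¹) μ := by
    have hne : IsUnit (-w.im) := isUnit_iff_ne_zero.mpr (by simpa using hw)
    exact (integrable_const_mul_iff hne _).mp hint
  refine ⟨hg, ?_⟩
  have h1 : (∫ t : ℝ, ((w - (t : ℂ))⁻¹).im ∂μ) = c.im := by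
    rw [myIntegralIm hf, hI]
  rw [him, integral_const_mul] at h1
  linarith

/-- Variance identity for the Cauchy transform. -/
lemma lemB (μ : Measure ℝ) [IsProbabilityMeasure μ] (w c : ℂ)
    (hf : Integrable (fun t : ℝ => (w - (t : ℂ))⁻¹) μ)
    (hg : Integrable (fun t : ℝ => (Complex.normSq (w - (t : ℂ)))⁻¹) μ)
    (hI : (∫ t : ℝ, (w - (t : ℂ))⁻¹ ∂μ) = c) :
    Integrable (fun t : ℝ => Complex.normSq ((w - (t : ℂ))⁻¹ - c)) μ ∧
    (∫ t : ℝ, Complex.normSq ((w - (t : ℂ))⁻¹ - c) ∂μ)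
      = (∫ t : ℝ, (Complex.normSq (w - (t : ℂ)))⁻¹ ∂μ) - Complex.normSq c := by
  have hre : (∫ t : ℝ, ((w - (t : ℂ))⁻¹).re ∂μ) = c.re := by rw [myIntegralRe hf, hI]
  have him : (∫ t : ℝ, ((w - (t : ℂ))⁻¹).im ∂μ) = c.im := by rw [myIntegralIm hf, hI]
  have hfr : Integrable (fun t : ℝ => (-2 * c.re) * ((w - (t : ℂ))⁻¹).re) μ :=
    (myIntRe hf).const_mul _
  have hfi : Integrable (fun t : ℝ => (-2 * c.im) * ((w - (t : ℂ))⁻¹).im) μ :=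
    (myIntIm hf).const_mul _
  have hfc : Integrable (fun _ : ℝ => Complex.normSq c) μ := integrable_const _
  have hkey : (fun t : ℝ => Complex.normSq ((w - (t : ℂ))⁻¹ - c))
      = fun t : ℝ => (Complex.normSq (w - (t : ℂ)))⁻¹
          + ((-2 * c.re) * ((w - (t : ℂ))⁻¹).re
            + ((-2 * c.im) * ((w - (t : ℂ))⁻¹).im + Complex.normSq c)) := by
    funext t
    have h1 : Complex.normSq ((w - (t : ℂ))⁻¹) = (Complex.normSq (w - (t : ℂ)))⁻¹ :=
      map_inv₀ Complex.normSq _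
    rw [← h1]
    simp only [Complex.normSq_apply, Complex.sub_re, Complex.sub_im]
    ring
  have hfic : Integrable (fun t : ℝ => (-2 * c.im) * ((w - (t : ℂ))⁻¹).im
      + Complex.normSq c) μ := hfi.add hfc
  have hrest : Integrable (fun t : ℝ => (-2 * c.re) * ((w - (t : ℂ))⁻¹).re
      + ((-2 * c.im) * ((w - (t : ℂ))⁻¹).im + Complex.normSq c)) μ :=
    hfr.add hfic
  have hint : Integrable (fun t : ℝ => Complex.normSq ((w - (t : ℂ))⁻¹ - c)) μ := by
    rw [hkey]; exact hg.add hrest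
  refine ⟨hint, ?_⟩
  rw [hkey, integral_add hg hrest, integral_add hfr hfic, integral_add hfi hfc,
    integral_const_mul, integral_const_mul, hre, him, integral_const]
  simp only [measure_univ, ENNReal.toReal_one, probReal_univ, one_smul, smul_eq_mul, Complex.normSq_apply]
  ring

/-- A probability measure concentrated at a point is a Dirac measure. -/
lemma eq_dirac_of_ae (μ : Measure ℝ) [IsProbabilityMeasure μ] (a : ℝ)
    (h : ∀ᵐ t ∂μ, t = a) : μ = Measure.dirac a := by
  have h0 : μ {t : ℝ | ¬ t = a} = 0 := ae_iff.mp h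
  ext s hs
  rw [Measure.dirac_apply' a hs]
  by_cases ha : a ∈ s
  · rw [Set.indicator_of_mem ha]
    refine le_antisymm prob_le_one ?_
    have hsub : (Set.univ : Set ℝ) ⊆ s ∪ {t : ℝ | ¬ t = a} := by
      intro x _
      by_cases hx : x = a
      · exact Or.inl (hx ▸ ha)
      · exact Or.inr hx
    calc (1 : ENNReal) = μ Set.univ := measure_univ.symm
      _ ≤ μ (s ∪ {t : ℝ | ¬ t = a}) := measure_mono hsub
      _ ≤ μ s + μ {t : ℝ | ¬ t = a} := measure_union_le _ _
      _ = μ s := by rw [h0, add_zero]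
  · rw [Set.indicator_of_notMem ha]
    exact measure_mono_null (fun x hx (hxa : x = a) => ha (hxa ▸ hx)) h0

/-- If the free convolution of `μ` with its reflection `μ̄` is `δ₀` (expressed via
additivity of Voiculescu transforms on a domain `Γ_{α,β}`: `F_μ(z+φ₁(z)) = z`,
`F_μ̄(z+φ₂(z)) = z` and `F_{δ₀}(z+φ₁(z)+φ₂(z)) = z`), then `μ` is a Dirac measure. -/
theorem stmt13 (μ : Measure ℝ) [IsProbabilityMeasure μ]
    (μbar : Measure ℝ) (hbar : μbar = μ.map (fun x : ℝ => -x))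
    (hfree : ∃ α β : ℝ, 0 < α ∧ 0 < β ∧ ∃ φ₁ φ₂ : ℂ → ℂ,
      ∀ z : ℂ, |z.re| < α * z.im → β < z.im →
        (∫ t : ℝ, (z + φ₁ z - (t : ℂ))⁻¹ ∂μ) = z⁻¹ ∧
        (∫ t : ℝ, (z + φ₂ z - (t : ℂ))⁻¹ ∂μbar) = z⁻¹ ∧
        (∫ t : ℝ, (z + φ₁ z + φ₂ z - (t : ℂ))⁻¹ ∂(Measure.dirac (0 : ℝ))) = z⁻¹) :
    ∃ a : ℝ, μ = Measure.dirac a := by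
  haveI : IsProbabilityMeasure μbar := by
    rw [hbar]; exact Measure.isProbabilityMeasure_map measurable_neg.aemeasurable
  obtain ⟨α, β, hα, hβ, φ₁, φ₂, h⟩ := hfree
  set z : ℂ := ⟨0, β + 1⟩ with hzdef
  have hy : (0 : ℝ) < β + 1 := by linarith
  have hzre : z.re = 0 := rfl
  have hzim : z.im = β + 1 := rfl
  have hz0 : z ≠ 0 := by
    intro h0
    have := congrArg Complex.im h0
    simp [hzim] at this
    linarith
  have hN : (0 : ℝ) < Complex.normSq z := Complex.normSq_pos.mpr hz0
  obtain ⟨e1, e2, e3⟩ := h z (by rw [hzre, hzim]; simpa using by positivity)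
    (by rw [hzim]; linarith)
  -- From the Dirac equation: φ₂ z = - φ₁ z
  rw [integral_dirac] at e3
  have hsum : z + φ₁ z + φ₂ z = z := by
    have := inv_inj.mp e3
    push_cast at this
    linear_combination this
  have hφ2 : φ₂ z = -φ₁ z := by linear_combination hsum
  set w₁ : ℂ := z + φ₁ z with hw1def
  set w₂ : ℂ := z + φ₂ z with hw2def
  have hcim : (z⁻¹).im = -(β + 1) / Complex.normSq z := by
    rw [Complex.inv_im, hzim]
  have hcim0 : (z⁻¹).im ≠ 0 := by
    rw [hcim]
    have : (0:ℝ) < (β + 1) / Complex.normSq z := by positivity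
    simp only [neg_div]
    linarith
  have hc0 : z⁻¹ ≠ 0 := inv_ne_zero hz0
  -- integrability from the nonvanishing of the integrals
  have hf₁ : Integrable (fun t : ℝ => (w₁ - (t : ℂ))⁻¹) μ := by
    by_contra hcon
    rw [integral_undef hcon] at e1
    exact hc0 e1.symm
  have hf₂ : Integrable (fun t : ℝ => (w₂ - (t : ℂ))⁻¹) μbar := by
    by_contra hcon
    rw [integral_undef hcon] at e2
    exact hc0 e2.symm
  -- nonzero imaginary parts
  have hw₁im : w₁.im ≠ 0 := by
    intro h0
    apply hcim0
    rw [← e1, ← myIntegralIm hf₁]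
    simp [Complex.inv_im, h0]
  have hw₂im : w₂.im ≠ 0 := by
    intro h0
    apply hcim0
    rw [← e2, ← myIntegralIm hf₂]
    simp [Complex.inv_im, h0]
  obtain ⟨hg₁, idA⟩ := lemA μ w₁ z⁻¹ hf₁ e1 hw₁im
  obtain ⟨hg₂, idA'⟩ := lemA μbar w₂ z⁻¹ hf₂ e2 hw₂im
  set A : ℝ := ∫ t : ℝ, (Complex.normSq (w₁ - (t : ℂ)))⁻¹ ∂μ with hAdef
  set A' : ℝ := ∫ t : ℝ, (Complex.normSq (w₂ - (t : ℂ)))⁻¹ ∂μbar with hA'def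
  have hA0 : 0 ≤ A := integral_nonneg fun t => inv_nonneg.mpr (Complex.normSq_nonneg _)
  have hA'0 : 0 ≤ A' := integral_nonneg fun t => inv_nonneg.mpr (Complex.normSq_nonneg _)
  obtain ⟨hvint₁, hvar₁⟩ := lemB μ w₁ z⁻¹ hf₁ hg₁ e1
  obtain ⟨hvint₂, hvar₂⟩ := lemB μbar w₂ z⁻¹ hf₂ hg₂ e2
  have hv₁nonneg : 0 ≤ ∫ t : ℝ, Complex.normSq ((w₁ - (t : ℂ))⁻¹ - z⁻¹) ∂μ :=
    integral_nonneg fun t => Complex.normSq_nonneg _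
  have hv₂nonneg : 0 ≤ ∫ t : ℝ, Complex.normSq ((w₂ - (t : ℂ))⁻¹ - z⁻¹) ∂μbar :=
    integral_nonneg fun t => Complex.normSq_nonneg _
  have hnc : Complex.normSq (z⁻¹) = (Complex.normSq z)⁻¹ := map_inv₀ Complex.normSq z
  have hCS₁ : (Complex.normSq z)⁻¹ ≤ A := by
    rw [← hnc]
    have := hvar₁ ▸ hv₁nonneg
    linarith
  have hCS₂ : (Complex.normSq z)⁻¹ ≤ A' := by
    rw [← hnc]
    have := hvar₂ ▸ hv₂nonneg
    linarith
  set s : ℝ := (φ₁ z).im with hsdef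
  have hw₁s : w₁.im = (β + 1) + s := by rw [hw1def, Complex.add_im, hzim]
  have hw₂s : w₂.im = (β + 1) - s := by
    rw [hw2def, Complex.add_im, hzim, hφ2, Complex.neg_im]; ring
  have hid₁ : ((β + 1) + s) * A = (β + 1) / Complex.normSq z := by
    rw [← hw₁s, idA, hcim]; ring
  have hid₂ : ((β + 1) - s) * A' = (β + 1) / Complex.normSq z := by
    rw [← hw₂s, idA', hcim]; ring
  have hrhs : (0:ℝ) < (β + 1) / Complex.normSq z := by positivity
  have hApos : 0 < A := by
    rcases hA0.lt_or_eq with h' | h'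
    · exact h'
    · exfalso; rw [← h', mul_zero] at hid₁; linarith
  have hA'pos : 0 < A' := by
    rcases hA'0.lt_or_eq with h' | h'
    · exact h'
    · exfalso; rw [← h', mul_zero] at hid₂; linarith
  -- s ≤ 0 and s ≥ 0, hence s = 0
  have hs1 : s ≤ 0 := by
    nlinarith [mul_le_mul_of_nonneg_left hCS₁ hy.le, div_eq_mul_inv (β+1) (Complex.normSq z)]
  have hs2 : 0 ≤ s := by
    nlinarith [mul_le_mul_of_nonneg_left hCS₂ hy.le, div_eq_mul_inv (β+1) (Complex.normSq z)]
  have hs0 : s = 0 := le_antisymm hs1 hs2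
  -- equality case: A = normSq z⁻¹
  have hAeq : A = (Complex.normSq z)⁻¹ := by
    rw [hs0, add_zero] at hid₁
    rw [div_eq_mul_inv] at hid₁
    exact mul_left_cancel₀ (ne_of_gt hy) hid₁
  have hvar0 : (∫ t : ℝ, Complex.normSq ((w₁ - (t : ℂ))⁻¹ - z⁻¹) ∂μ) = 0 := by
    rw [hvar₁, ← hAdef, hAeq, hnc, sub_self]
  have hae : ∀ᵐ t ∂μ, Complex.normSq ((w₁ - (t : ℝ))⁻¹ - z⁻¹) = 0 := by
    have := (integral_eq_zero_iff_of_nonneg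
      (fun t : ℝ => Complex.normSq_nonneg ((w₁ - (t : ℂ))⁻¹ - z⁻¹)) hvint₁).mp hvar0
    filter_upwards [this] with t ht
    exact ht
  refine ⟨(w₁ - z).re, eq_dirac_of_ae μ _ ?_⟩
  filter_upwards [hae] with t ht
  have h1 : (w₁ - (t : ℂ))⁻¹ = z⁻¹ := by
    have := Complex.normSq_eq_zero.mp ht
    linear_combination this
  have h2 : w₁ - (t : ℂ) = z := inv_inj.mp h1
  have h3 : (t : ℂ) = w₁ - z := by linear_combination -h2
  have := congrArg Complex.re h3
  simpa using this
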